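/- Let E be a nonempty compact totally disconnected (zero-dimensional) metric space. Then there exists a metric space X homeomorphic to the Cantor space {0,1}^ℕ, an isometric embedding e : E → X, and a continuous map r : X → E with r ∘ e = id_E (i.e., X retracts continuously onto the isometric copy of E). -/

import Mathlib

universe u

open Set Metric Topology Filter

/-- In a nonempty second-countable totally separated space there is a countable family of
clopen sets separating points. -/
lemma exists_clopen_separating_family (E : Type u) [TopologicalSpace E] [Nonempty E]
    [SecondCountableTopology E] [TotallySeparatedSpace E] :
    ∃ f : ℕ → Set E, (∀ n, IsClopen (f n)) ∧
      ∀ x y : E, x ≠ y → ∃ n, x ∈ f n ∧ y ∉ f n := by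
  classical
  have hBasis := TopologicalSpace.isBasis_countableBasis E
  have hBc := TopologicalSpace.countable_countableBasis E
  set B := TopologicalSpace.countableBasis E with hB
  -- for each pair of basis sets, choose a clopen set if possible
  let P : Set E × Set E → Prop := fun q => ∃ K : Set E, IsClopen K ∧ q.1 ⊆ K ∧ q.2 ⊆ Kᶜ
  let K : Set E × Set E → Set E := fun q => if h : P q then h.choose else ∅
  have hKclopen : ∀ q, IsClopen (K q) := by
    intro q
    by_cases h : P q
    · have : K q = h.choose := dif_pos h
      rw [this]
      exact h.choose_spec.1
    · have : K q = ∅ := dif_neg h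
      rw [this]
      exact isClopen_empty
  have hKP : ∀ q, P q → q.1 ⊆ K q ∧ q.2 ⊆ (K q)ᶜ := by
    intro q hq
    have : K q = hq.choose := dif_pos hq
    rw [this]
    exact hq.choose_spec.2
  have hfam : (K '' (B ×ˢ B) ∪ {∅}).Countable :=
    ((hBc.prod hBc).image K).union (Set.countable_singleton _)
  obtain ⟨f, hf⟩ := hfam.exists_eq_range ⟨∅, Or.inr rfl⟩
  refine ⟨f, ?_, ?_⟩
  · intro n
    have : f n ∈ K '' (B ×ˢ B) ∪ {∅} := hf ▸ Set.mem_range_self n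
    rcases this with ⟨q, _, hq⟩ | h
    · rw [← hq]; exact hKclopen q
    · simp only [Set.mem_singleton_iff] at h
      rw [h]; exact isClopen_empty
  · intro x y hxy
    obtain ⟨k0, hk0, hxk0, hyk0⟩ :=
      totallySeparatedSpace_iff_exists_isClopen.mp ‹_› hxy
    obtain ⟨U, hU, hxU, hUk⟩ := hBasis.exists_subset_of_mem_open hxk0 hk0.2
    obtain ⟨V, hV, hyV, hVk⟩ := hBasis.exists_subset_of_mem_open hyk0 hk0.compl.2
    have hP : P (U, V) := ⟨k0, hk0, hUk, hVk⟩
    have hmem : K (U, V) ∈ K '' (B ×ˢ B) ∪ {∅} :=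
      Or.inl ⟨(U, V), Set.mk_mem_prod hU hV, rfl⟩
    rw [hf] at hmem
    obtain ⟨n, hn⟩ := hmem
    refine ⟨n, ?_, ?_⟩
    · rw [hn]
      exact (hKP (U, V) hP).1 hxU
    · rw [hn]
      exact fun hyK => (hKP (U, V) hP).2 hyV hyK

/-- An opaque copy of the Cantor space, to carry a nonstandard metric. -/
def CantorCopy : Type u := ULift.{u} (ℕ → Bool)

/-- The canonical equivalence between `CantorCopy` and the Cantor space. -/
def cantorCopyEquiv : CantorCopy.{u} ≃ (ℕ → Bool) := Equiv.ulift

/-- Every nonempty compact totally disconnected metric space `E` embeds isometrically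
into a metric space `X` homeomorphic to the Cantor space `ℕ → Bool`, in such a way
that `X` retracts continuously onto the isometric copy of `E`. -/
theorem exists_cantor_isometric_embedding_with_retraction
    (E : Type u) [MetricSpace E] [Nonempty E] [CompactSpace E]
    [TotallyDisconnectedSpace E] :
    ∃ (X : Type u) (_ : MetricSpace X) (e : E → X) (r : X → E),
      Nonempty (X ≃ₜ (ℕ → Bool)) ∧ Isometry e ∧ Continuous r ∧ r ∘ e = id := by
  classical
  haveI : TotallySeparatedSpace E := loc_compact_t2_tot_disc_iff_tot_sep.mp ‹_›
  obtain ⟨f, hfclopen, hfsep⟩ := exists_clopen_separating_family E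
  -- topological embedding of `E` into the Cantor space
  set g : E → ℕ → Bool := fun x n => (f n).boolIndicator x with hg
  have gcont : Continuous g :=
    continuous_pi fun n => (continuous_boolIndicator_iff_isClopen _).2 (hfclopen n)
  have ginj : Function.Injective g := by
    intro x y hxy
    by_contra hne
    obtain ⟨n, hxn, hyn⟩ := hfsep x y hne
    have h1 : (f n).boolIndicator x = true := ((f n).mem_iff_boolIndicator x).1 hxn
    have h2 : (f n).boolIndicator y = false := ((f n).notMem_iff_boolIndicator y).1 hyn
    have := congrFun hxy n
    rw [hg] at this
    simp only at this
    rw [h1, h2] at this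
    exact Bool.noConfusion this
  set S : Set (ℕ → Bool) := Set.range g with hS
  have hSc : IsClosed S := (isCompact_range gcont).isClosed
  have hSne : S.Nonempty := Set.range_nonempty g
  obtain ⟨ret, hret_id, hret_range, hret_cont⟩ := PiNat.exists_retraction_of_isClosed hSc hSne
  -- homeomorphism of `E` with `S`
  let φe : E ≃ S := Equiv.ofInjective g ginj
  have φcont : Continuous φe := gcont.subtype_mk _
  let φ : E ≃ₜ S := φcont.homeoOfEquivCompactToT2
  have hretS : ∀ x, ret x ∈ S := fun x => hret_range ▸ Set.mem_range_self x
  let p : (ℕ → Bool) → E := fun x => φ.symm ⟨ret x, hretS x⟩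
  have pcont : Continuous p := φ.symm.continuous.comp (hret_cont.subtype_mk _)
  have pg : ∀ a : E, p (g a) = a := by
    intro a
    have h1 : ret (g a) = g a := hret_id _ (Set.mem_range_self a)
    have h2 : (⟨ret (g a), hretS _⟩ : S) = φe a := by
      apply Subtype.ext
      exact h1
    show φ.symm ⟨ret (g a), hretS _⟩ = a
    rw [h2]
    exact φ.symm_apply_apply a
  -- the metric
  letI m0 : MetricSpace (ℕ → Bool) := PiNat.metricSpace
  let F : (ℕ → Bool) → ℝ := fun x => infDist x S
  have hFnn : ∀ x, 0 ≤ F x := fun x => infDist_nonneg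
  have hF0 : ∀ x ∈ S, F x = 0 := fun x hx => infDist_zero_of_mem hx
  have hFmem : ∀ x, F x = 0 → x ∈ S := fun x hx =>
    (hSc.mem_iff_infDist_zero hSne).2 hx
  have hFlip : ∀ x y : ℕ → Bool, F x ≤ F y + dist x y := fun x y =>
    infDist_le_infDist_add_dist
  let D : (ℕ → Bool) → (ℕ → Bool) → ℝ :=
    fun x y => dist (p x) (p y) + min (dist x y) (F x + F y)
  have hD_self : ∀ x, D x x = 0 := by
    intro x
    simp only [D, dist_self]
    rw [min_eq_left (add_nonneg (hFnn x) (hFnn x))]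
    ring
  have hD_comm : ∀ x y, D x y = D y x := by
    intro x y
    simp only [D, dist_comm, add_comm (F x)]
  have hD_triangle : ∀ x y z, D x z ≤ D x y + D y z := by
    intro x y z
    have h1 : dist (p x) (p z) ≤ dist (p x) (p y) + dist (p y) (p z) := dist_triangle _ _ _
    have h2 : min (dist x z) (F x + F z)
        ≤ min (dist x y) (F x + F y) + min (dist y z) (F y + F z) := by
      rcases le_total (dist x y) (F x + F y) with hxy | hxy <;>
        rcases le_total (dist y z) (F y + F z) with hyz | hyz
      · rw [min_eq_left hxy, min_eq_left hyz]
        exact le_trans (min_le_left _ _) (dist_triangle _ _ _)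
      · rw [min_eq_left hxy, min_eq_right hyz]
        have := hFlip x y
        have hmin := min_le_right (dist x z) (F x + F z)
        linarith
      · rw [min_eq_right hxy, min_eq_left hyz]
        have h3 : F z ≤ F y + dist y z := by
          have := hFlip z y
          rwa [dist_comm z y] at this
        have hmin := min_le_right (dist x z) (F x + F z)
        linarith
      · rw [min_eq_right hxy, min_eq_right hyz]
        have hmin := min_le_right (dist x z) (F x + F z)
        have := hFnn y
        linarith
    simp only [D]
    linarith
  have hD_eq : ∀ x y, D x y = 0 → x = y := by
    intro x y hxy
    have hnn1 : 0 ≤ dist (p x) (p y) := dist_nonneg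
    have hnn2 : 0 ≤ min (dist x y) (F x + F y) :=
      le_min dist_nonneg (add_nonneg (hFnn x) (hFnn y))
    have h1 : dist (p x) (p y) = 0 := by
      simp only [D] at hxy; linarith
    have h2 : min (dist x y) (F x + F y) = 0 := by
      simp only [D] at hxy; linarith
    have hpxy : p x = p y := by rwa [dist_eq_zero] at h1
    have hrxy : ret x = ret y := by
      have h3 : (⟨ret x, hretS x⟩ : S) = ⟨ret y, hretS y⟩ := φ.symm.injective hpxy
      exact congrArg Subtype.val h3
    rcases le_total (dist x y) (F x + F y) with hle | hle
    · rw [min_eq_left hle] at h2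
      rwa [dist_eq_zero] at h2
    · rw [min_eq_right hle] at h2
      have hFx : F x = 0 := le_antisymm (by linarith [hFnn x, hFnn y]) (hFnn x)
      have hFy : F y = 0 := le_antisymm (by linarith [hFnn x, hFnn y]) (hFnn y)
      have hxS : x ∈ S := hFmem x hFx
      have hyS : y ∈ S := hFmem y hFy
      calc x = ret x := (hret_id x hxS).symm
        _ = ret y := hrxy
        _ = y := hret_id y hyS
  -- the new metric space on `CantorCopy`
  letI M : MetricSpace CantorCopy.{u} :=
    { dist := fun x y => D (cantorCopyEquiv x) (cantorCopyEquiv y)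
      dist_self := fun x => hD_self _
      dist_comm := fun x y => hD_comm _ _
      dist_triangle := fun x y z => hD_triangle _ _ _
      eq_of_dist_eq_zero := fun h => cantorCopyEquiv.injective (hD_eq _ _ h) }
  -- continuity of `D` in the product topology
  have hDcont : ∀ x : ℕ → Bool, Continuous fun y => D y x := by
    intro x
    apply Continuous.add
    · exact (pcont.dist continuous_const)
    · exact Continuous.min (continuous_id.dist continuous_const)
        ((continuous_infDist_pt S).add continuous_const)
  -- the homeomorphism
  have hup : Continuous (cantorCopyEquiv.{u}.symm : (ℕ → Bool) → CantorCopy.{u}) := by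
    rw [continuous_iff_continuousAt]
    intro x
    rw [ContinuousAt, Metric.tendsto_nhds]
    intro ε hε
    have h0 : Filter.Tendsto (fun y => D y x) (𝓝 x) (𝓝 0) := by
      have := (hDcont x).tendsto x
      rwa [hD_self x] at this
    filter_upwards [h0.eventually_lt_const hε] with y hy
    show D (cantorCopyEquiv.{u} (cantorCopyEquiv.{u}.symm y)) (cantorCopyEquiv.{u} (cantorCopyEquiv.{u}.symm x)) < ε
    rwa [cantorCopyEquiv.apply_symm_apply, cantorCopyEquiv.apply_symm_apply]
  let H : (ℕ → Bool) ≃ₜ CantorCopy.{u} :=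
    @Continuous.homeoOfEquivCompactToT2 _ _ _ _ _ _ cantorCopyEquiv.symm hup
  refine ⟨CantorCopy.{u}, M, fun a => cantorCopyEquiv.symm (g a),
    fun x => p (cantorCopyEquiv x), ⟨H.symm⟩, ?_, ?_, ?_⟩
  · -- isometry
    apply Isometry.of_dist_eq
    intro a b
    show D (cantorCopyEquiv.{u} (cantorCopyEquiv.{u}.symm (g a)))
        (cantorCopyEquiv.{u} (cantorCopyEquiv.{u}.symm (g b))) = dist a b
    rw [cantorCopyEquiv.apply_symm_apply, cantorCopyEquiv.apply_symm_apply]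
    have h1 : F (g a) = 0 := hF0 _ ⟨a, rfl⟩
    have h2 : F (g b) = 0 := hF0 _ ⟨b, rfl⟩
    simp only [D, pg a, pg b, h1, h2, add_zero]
    rw [min_eq_right dist_nonneg, add_zero]
  · -- continuity of the retraction
    have hdown : Continuous (cantorCopyEquiv.{u} : CantorCopy.{u} → (ℕ → Bool)) :=
      H.symm.continuous
    exact pcont.comp hdown
  · funext a
    show p (cantorCopyEquiv.{u} (cantorCopyEquiv.{u}.symm (g a))) = a
    rw [cantorCopyEquiv.apply_symm_apply]
    exact pg a
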